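/- (Decomposition of the expected repair count over conflict-independent parts.) Let D₁ and D₂ be disjoint finite sets with no conflicts across them (¬C(a,b) for all a ∈ D₁, b ∈ D₂), and set n₁ = |D₁|, n₂ = |D₂|, n = n₁ + n₂. For 0 ≤ m ≤ n, let P^m be the expected value of I_MC over a uniformly random m-element subset of D₁ ∪ D₂, and for i ∈ {1,2} and 0 ≤ mᵢ ≤ nᵢ let Tᵢ^{mᵢ} be the expected value of I_MC over a uniformly random mᵢ-element subset of Dᵢ. Then P^m = (1/C(n,m)) · Σ_{m₁+m₂=m, 0≤m₁≤n₁, 0≤m₂≤n₂} C(n₁,m₁) · C(n₂,m₂) · T₁^{m₁} · T₂^{m₂}. -/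

import Mathlib

open scoped BigOperators Classical

variable {α : Type*} [DecidableEq α]

/-- A finite set `E` is consistent if it contains no two distinct conflicting elements. -/
def Consistent (C : α → α → Prop) (E : Finset α) : Prop :=
  ∀ g ∈ E, ∀ h ∈ E, g ≠ h → ¬ C g h

/-- A repair of `E` is a maximal (under inclusion) consistent subset of `E`. -/
def IsRepair (C : α → α → Prop) (S E : Finset α) : Prop :=
  S ⊆ E ∧ Consistent C S ∧ ∀ S', S ⊆ S' → S' ⊆ E → Consistent C S' → S' = S

/-- The inconsistency measure `I_MC`: the number of repairs of `E`. -/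
noncomputable def IMC (C : α → α → Prop) (E : Finset α) : ℕ :=
  (E.powerset.filter fun S => IsRepair C S E).card

/-- The expected value of `I_MC` over a uniformly random `m`-element subset of `T`. -/
noncomputable def expIMC (C : α → α → Prop) (T : Finset α) (m : ℕ) : ℝ :=
  (∑ S ∈ T.powersetCard m, (IMC C S : ℝ)) / (T.card.choose m : ℝ)

lemma consistent_subset {C : α → α → Prop} {A B : Finset α} (h : A ⊆ B)
    (hB : Consistent C B) : Consistent C A :=
  fun g hg h' hh' => hB g (h hg) h' (h hh')

lemma consistent_union_iff {C : α → α → Prop} (hsymm : Symmetric C)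
    {D₁ D₂ A B : Finset α} (hA : A ⊆ D₁) (hB : B ⊆ D₂)
    (hcross : ∀ a ∈ D₁, ∀ b ∈ D₂, ¬ C a b) :
    Consistent C (A ∪ B) ↔ Consistent C A ∧ Consistent C B := by
  constructor
  · intro h
    exact ⟨consistent_subset Finset.subset_union_left h,
      consistent_subset Finset.subset_union_right h⟩
  · rintro ⟨h1, h2⟩ g hg h' hh' hne
    rcases Finset.mem_union.mp hg with hg' | hg' <;>
      rcases Finset.mem_union.mp hh' with hh'' | hh''
    · exact h1 g hg' h' hh'' hne
    · exact hcross g (hA hg') h' (hB hh'')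
    · exact fun hc => hcross h' (hA hh'') g (hB hg') (hsymm hc)
    · exact h2 g hg' h' hh'' hne

lemma isRepair_union_iff {C : α → α → Prop} (hsymm : Symmetric C)
    {D₁ D₂ S₁ S₂ R₁ R₂ : Finset α} (hdisj : Disjoint D₁ D₂)
    (hcross : ∀ a ∈ D₁, ∀ b ∈ D₂, ¬ C a b)
    (hS₁ : S₁ ⊆ D₁) (hS₂ : S₂ ⊆ D₂) (hR₁ : R₁ ⊆ D₁) (hR₂ : R₂ ⊆ D₂) :
    IsRepair C (R₁ ∪ R₂) (S₁ ∪ S₂) ↔ IsRepair C R₁ S₁ ∧ IsRepair C R₂ S₂ := by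
  have hsplit : ∀ T : Finset α, T ⊆ S₁ ∪ S₂ → T = (T ∩ D₁) ∪ (T ∩ D₂) ∧
      T ∩ D₁ ⊆ S₁ ∧ T ∩ D₂ ⊆ S₂ := by
    intro T hT
    refine ⟨?_, ?_, ?_⟩
    · ext x
      simp only [Finset.mem_union, Finset.mem_inter]
      constructor
      · intro hx
        rcases Finset.mem_union.mp (hT hx) with h | h
        · exact Or.inl ⟨hx, hS₁ h⟩
        · exact Or.inr ⟨hx, hS₂ h⟩
      · rintro (⟨h, _⟩ | ⟨h, _⟩) <;> exact h
    · intro x hx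
      rcases Finset.mem_inter.mp hx with ⟨hxT, hxD⟩
      rcases Finset.mem_union.mp (hT hxT) with h | h
      · exact h
      · exact absurd hxD (Finset.disjoint_right.mp hdisj (hS₂ h))
    · intro x hx
      rcases Finset.mem_inter.mp hx with ⟨hxT, hxD⟩
      rcases Finset.mem_union.mp (hT hxT) with h | h
      · exact absurd hxD (Finset.disjoint_left.mp hdisj (hS₁ h))
      · exact h
  constructor
  · rintro ⟨hsub, hcons, hmax⟩
    have hc1 : Consistent C R₁ := consistent_subset Finset.subset_union_left hcons
    have hc2 : Consistent C R₂ := consistent_subset Finset.subset_union_right hcons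
    have hRsub := hsplit _ hsub
    have hR₁S : R₁ ⊆ S₁ := by
      intro x hx
      exact hRsub.2.1 (Finset.mem_inter.mpr ⟨Finset.mem_union_left _ hx, hR₁ hx⟩)
    have hR₂S : R₂ ⊆ S₂ := by
      intro x hx
      exact hRsub.2.2 (Finset.mem_inter.mpr ⟨Finset.mem_union_right _ hx, hR₂ hx⟩)
    refine ⟨⟨hR₁S, hc1, ?_⟩, ⟨hR₂S, hc2, ?_⟩⟩
    · intro S' hRS' hS'S hS'c
      have hcons' : Consistent C (S' ∪ R₂) := by
        rw [consistent_union_iff hsymm (hS'S.trans hS₁) hR₂ hcross]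
        exact ⟨hS'c, hc2⟩
      have := hmax (S' ∪ R₂)
        (Finset.union_subset_union hRS' (Finset.Subset.refl _))
        (Finset.union_subset_union hS'S hR₂S) hcons'
      apply Finset.Subset.antisymm _ hRS'
      intro x hx
      have hx' : x ∈ R₁ ∪ R₂ := this ▸ Finset.mem_union_left _ hx
      rcases Finset.mem_union.mp hx' with h | h
      · exact h
      · exact absurd (hS₁ (hS'S hx)) (Finset.disjoint_right.mp hdisj (hR₂ h))
    · intro S' hRS' hS'S hS'c
      have hcons' : Consistent C (R₁ ∪ S') := by
        rw [consistent_union_iff hsymm hR₁ (hS'S.trans hS₂) hcross]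
        exact ⟨hc1, hS'c⟩
      have := hmax (R₁ ∪ S')
        (Finset.union_subset_union (Finset.Subset.refl _) hRS')
        (Finset.union_subset_union hR₁S hS'S) hcons'
      apply Finset.Subset.antisymm _ hRS'
      intro x hx
      have hx' : x ∈ R₁ ∪ R₂ := this ▸ Finset.mem_union_right _ hx
      rcases Finset.mem_union.mp hx' with h | h
      · exact absurd (hS₂ (hS'S hx)) (Finset.disjoint_left.mp hdisj (hR₁ h))
      · exact h
  · rintro ⟨⟨hsub₁, hc₁, hmax₁⟩, ⟨hsub₂, hc₂, hmax₂⟩⟩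
    refine ⟨Finset.union_subset_union hsub₁ hsub₂, ?_, ?_⟩
    · rw [consistent_union_iff hsymm hR₁ hR₂ hcross]; exact ⟨hc₁, hc₂⟩
    · intro S' hRS' hS'S hS'c
      obtain ⟨hSeq, hS'1, hS'2⟩ := hsplit S' hS'S
      have h1 : R₁ ⊆ S' ∩ D₁ := fun x hx =>
        Finset.mem_inter.mpr ⟨hRS' (Finset.mem_union_left _ hx), hR₁ hx⟩
      have h2 : R₂ ⊆ S' ∩ D₂ := fun x hx =>
        Finset.mem_inter.mpr ⟨hRS' (Finset.mem_union_right _ hx), hR₂ hx⟩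
      have e1 := hmax₁ (S' ∩ D₁) h1 hS'1
        (consistent_subset Finset.inter_subset_left hS'c)
      have e2 := hmax₂ (S' ∩ D₂) h2 hS'2
        (consistent_subset Finset.inter_subset_left hS'c)
      rw [hSeq, e1, e2]

lemma IMC_union {C : α → α → Prop} (hsymm : Symmetric C)
    {D₁ D₂ S₁ S₂ : Finset α} (hdisj : Disjoint D₁ D₂)
    (hcross : ∀ a ∈ D₁, ∀ b ∈ D₂, ¬ C a b)
    (hS₁ : S₁ ⊆ D₁) (hS₂ : S₂ ⊆ D₂) :
    IMC C (S₁ ∪ S₂) = IMC C S₁ * IMC C S₂ := by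
  classical
  unfold IMC
  rw [← Finset.card_product]
  apply Finset.card_bij' (fun R _ => (R ∩ D₁, R ∩ D₂)) (fun p _ => p.1 ∪ p.2)
  · intro R hR
    simp only [Finset.mem_filter, Finset.mem_powerset] at hR
    obtain ⟨hRsub, hrep⟩ := hR
    have hRD₁ : R ∩ D₁ ⊆ D₁ := Finset.inter_subset_right
    have hRD₂ : R ∩ D₂ ⊆ D₂ := Finset.inter_subset_right
    have hReq : R = (R ∩ D₁) ∪ (R ∩ D₂) := by
      ext x
      simp only [Finset.mem_union, Finset.mem_inter]
      constructor
      · intro hx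
        rcases Finset.mem_union.mp (hRsub hx) with h | h
        · exact Or.inl ⟨hx, hS₁ h⟩
        · exact Or.inr ⟨hx, hS₂ h⟩
      · rintro (⟨h, _⟩ | ⟨h, _⟩) <;> exact h
    rw [hReq] at hrep
    rw [isRepair_union_iff hsymm hdisj hcross hS₁ hS₂ hRD₁ hRD₂] at hrep
    simp only [Finset.mem_product, Finset.mem_filter, Finset.mem_powerset]
    exact ⟨⟨hrep.1.1, hrep.1⟩, hrep.2.1, hrep.2⟩
  · intro p hp
    simp only [Finset.mem_product, Finset.mem_filter, Finset.mem_powerset] at hp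
    simp only [Finset.mem_filter, Finset.mem_powerset]
    refine ⟨Finset.union_subset_union hp.1.1 hp.2.1, ?_⟩
    exact (isRepair_union_iff hsymm hdisj hcross hS₁ hS₂
      (hp.1.1.trans hS₁) (hp.2.1.trans hS₂)).mpr ⟨hp.1.2, hp.2.2⟩
  · intro R hR
    simp only [Finset.mem_filter, Finset.mem_powerset] at hR
    ext x
    simp only [Finset.mem_union, Finset.mem_inter]
    constructor
    · rintro (⟨h, _⟩ | ⟨h, _⟩) <;> exact h
    · intro hx
      rcases Finset.mem_union.mp (hR.1 hx) with h | h
      · exact Or.inl ⟨hx, hS₁ h⟩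
      · exact Or.inr ⟨hx, hS₂ h⟩
  · intro p hp
    simp only [Finset.mem_product, Finset.mem_filter, Finset.mem_powerset] at hp
    have e1 : (p.1 ∪ p.2) ∩ D₁ = p.1 := by
      apply Finset.Subset.antisymm
      · intro x hx
        rcases Finset.mem_inter.mp hx with ⟨hxu, hxD⟩
        rcases Finset.mem_union.mp hxu with h | h
        · exact h
        · exact absurd hxD (Finset.disjoint_right.mp hdisj (hp.2.1.trans hS₂ h))
      · intro x hx
        exact Finset.mem_inter.mpr ⟨Finset.mem_union_left _ hx, hp.1.1.trans hS₁ hx⟩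
    have e2 : (p.1 ∪ p.2) ∩ D₂ = p.2 := by
      apply Finset.Subset.antisymm
      · intro x hx
        rcases Finset.mem_inter.mp hx with ⟨hxu, hxD⟩
        rcases Finset.mem_union.mp hxu with h | h
        · exact absurd hxD (Finset.disjoint_left.mp hdisj (hp.1.1.trans hS₁ h))
        · exact h
      · intro x hx
        exact Finset.mem_inter.mpr ⟨Finset.mem_union_right _ hx, hp.2.1.trans hS₂ hx⟩
    rw [e1, e2]

lemma sum_powersetCard_union {f : Finset α → ℝ} {D₁ D₂ : Finset α}
    (hdisj : Disjoint D₁ D₂) (m : ℕ) :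
    ∑ S ∈ (D₁ ∪ D₂).powersetCard m, f S =
      ∑ p ∈ Finset.HasAntidiagonal.antidiagonal m, ∑ S₁ ∈ D₁.powersetCard p.1,
        ∑ S₂ ∈ D₂.powersetCard p.2, f (S₁ ∪ S₂) := by
  classical
  have step : ∑ p ∈ Finset.HasAntidiagonal.antidiagonal m, ∑ S₁ ∈ D₁.powersetCard p.1,
      ∑ S₂ ∈ D₂.powersetCard p.2, f (S₁ ∪ S₂) =
      ∑ x ∈ (Finset.HasAntidiagonal.antidiagonal m).sigma
        (fun p => D₁.powersetCard p.1 ×ˢ D₂.powersetCard p.2), f (x.2.1 ∪ x.2.2) := by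
    rw [Finset.sum_sigma]
    exact Finset.sum_congr rfl fun p _ => (Finset.sum_product _ _ (fun y => f (y.1 ∪ y.2))).symm
  rw [step]
  · apply Finset.sum_nbij' (fun S => ⟨((S ∩ D₁).card, (S ∩ D₂).card), (S ∩ D₁, S ∩ D₂)⟩)
      (fun x => x.2.1 ∪ x.2.2)
    · intro S hS
      rw [Finset.mem_powersetCard] at hS
      obtain ⟨hsub, hcard⟩ := hS
      have hReq : S = (S ∩ D₁) ∪ (S ∩ D₂) := by
        ext x
        simp only [Finset.mem_union, Finset.mem_inter]
        constructor
        · intro hx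
          rcases Finset.mem_union.mp (hsub hx) with h | h
          · exact Or.inl ⟨hx, h⟩
          · exact Or.inr ⟨hx, h⟩
        · rintro (⟨h, _⟩ | ⟨h, _⟩) <;> exact h
      have hdisj' : Disjoint (S ∩ D₁) (S ∩ D₂) :=
        hdisj.mono Finset.inter_subset_right Finset.inter_subset_right
      simp only [Finset.mem_sigma, Finset.HasAntidiagonal.mem_antidiagonal, Finset.mem_product,
        Finset.mem_powersetCard]
      refine ⟨?_, ⟨Finset.inter_subset_right, trivial⟩, Finset.inter_subset_right, trivial⟩
      rw [← Finset.card_union_of_disjoint hdisj', ← hReq, hcard]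
    · intro x hx
      simp only [Finset.mem_sigma, Finset.HasAntidiagonal.mem_antidiagonal, Finset.mem_product,
        Finset.mem_powersetCard] at hx
      obtain ⟨hsum, ⟨h1, c1⟩, h2, c2⟩ := hx
      rw [Finset.mem_powersetCard]
      constructor
      · exact Finset.union_subset_union h1 h2
      · rw [Finset.card_union_of_disjoint (hdisj.mono h1 h2), c1, c2, hsum]
    · intro S hS
      rw [Finset.mem_powersetCard] at hS
      ext x
      simp only [Finset.mem_union, Finset.mem_inter]
      constructor
      · rintro (⟨h, _⟩ | ⟨h, _⟩) <;> exact h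
      · intro hx
        rcases Finset.mem_union.mp (hS.1 hx) with h | h
        · exact Or.inl ⟨hx, h⟩
        · exact Or.inr ⟨hx, h⟩
    · intro x hx
      simp only [Finset.mem_sigma, Finset.mem_antidiagonal, Finset.mem_product,
        Finset.mem_powersetCard] at hx
      obtain ⟨hsum, ⟨h1, c1⟩, h2, c2⟩ := hx
      have e1 : (x.2.1 ∪ x.2.2) ∩ D₁ = x.2.1 := by
        apply Finset.Subset.antisymm
        · intro y hy
          rcases Finset.mem_inter.mp hy with ⟨hyu, hyD⟩
          rcases Finset.mem_union.mp hyu with h | h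
          · exact h
          · exact absurd hyD (Finset.disjoint_right.mp hdisj (h2 h))
        · exact fun y hy => Finset.mem_inter.mpr ⟨Finset.mem_union_left _ hy, h1 hy⟩
      have e2 : (x.2.1 ∪ x.2.2) ∩ D₂ = x.2.2 := by
        apply Finset.Subset.antisymm
        · intro y hy
          rcases Finset.mem_inter.mp hy with ⟨hyu, hyD⟩
          rcases Finset.mem_union.mp hyu with h | h
          · exact absurd hyD (Finset.disjoint_left.mp hdisj (h1 h))
          · exact h
        · exact fun y hy => Finset.mem_inter.mpr ⟨Finset.mem_union_right _ hy, h2 hy⟩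
      rw [Sigma.ext_iff]
      constructor
      · rw [e1, e2, c1, c2]
      · rw [e1, e2]
    · intro S hS
      rw [Finset.mem_powersetCard] at hS
      show f S = f (S ∩ D₁ ∪ S ∩ D₂)
      congr 1
      ext x
      simp only [Finset.mem_union, Finset.mem_inter]
      constructor
      · intro hx
        rcases Finset.mem_union.mp (hS.1 hx) with h | h
        · exact Or.inl ⟨hx, h⟩
        · exact Or.inr ⟨hx, h⟩
      · rintro (⟨h, _⟩ | ⟨h, _⟩) <;> exact h

/-- Decomposition of the expected repair count over conflict-independent parts:
if `D₁`, `D₂` are disjoint and conflict-free across each other, then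
`P^m = (1/C(n,m)) · Σ_{m₁+m₂=m, m₁≤n₁, m₂≤n₂} C(n₁,m₁)·C(n₂,m₂)·T₁^{m₁}·T₂^{m₂}`. -/
theorem expIMC_union_decomposition (C : α → α → Prop) (hsymm : Symmetric C)
    (D₁ D₂ : Finset α) (hdisj : Disjoint D₁ D₂)
    (hcross : ∀ a ∈ D₁, ∀ b ∈ D₂, ¬ C a b)
    (m : ℕ) (hm : m ≤ D₁.card + D₂.card) :
    expIMC C (D₁ ∪ D₂) m =
      (1 / (((D₁.card + D₂.card).choose m : ℕ) : ℝ)) *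
        ∑ p ∈ (Finset.HasAntidiagonal.antidiagonal m).filter
            (fun p => p.1 ≤ D₁.card ∧ p.2 ≤ D₂.card),
          (D₁.card.choose p.1 : ℝ) * (D₂.card.choose p.2 : ℝ) *
            expIMC C D₁ p.1 * expIMC C D₂ p.2 := by
  have hnum : ∑ S ∈ (D₁ ∪ D₂).powersetCard m, (IMC C S : ℝ) =
      ∑ p ∈ Finset.HasAntidiagonal.antidiagonal m,
        (∑ S₁ ∈ D₁.powersetCard p.1, (IMC C S₁ : ℝ)) *
        (∑ S₂ ∈ D₂.powersetCard p.2, (IMC C S₂ : ℝ)) := by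
    rw [sum_powersetCard_union hdisj]
    refine Finset.sum_congr rfl fun p _ => ?_
    rw [Finset.sum_mul_sum]
    refine Finset.sum_congr rfl fun S₁ hS₁ => Finset.sum_congr rfl fun S₂ hS₂ => ?_
    rw [Finset.mem_powersetCard] at hS₁ hS₂
    rw [IMC_union hsymm hdisj hcross hS₁.1 hS₂.1, Nat.cast_mul]
  have key : ∑ p ∈ Finset.HasAntidiagonal.antidiagonal m,
      (∑ S₁ ∈ D₁.powersetCard p.1, (IMC C S₁ : ℝ)) *
      (∑ S₂ ∈ D₂.powersetCard p.2, (IMC C S₂ : ℝ)) =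
      ∑ p ∈ (Finset.HasAntidiagonal.antidiagonal m).filter
          (fun p => p.1 ≤ D₁.card ∧ p.2 ≤ D₂.card),
        (D₁.card.choose p.1 : ℝ) * (D₂.card.choose p.2 : ℝ) *
          expIMC C D₁ p.1 * expIMC C D₂ p.2 := by
    rw [Finset.sum_filter]
    refine Finset.sum_congr rfl fun p _ => ?_
    by_cases h1 : p.1 ≤ D₁.card
    · by_cases h2 : p.2 ≤ D₂.card
      · rw [if_pos ⟨h1, h2⟩]
        have c1 : ((D₁.card.choose p.1 : ℕ) : ℝ) ≠ 0 := by
          exact_mod_cast (Nat.choose_pos h1).ne'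
        have c2 : ((D₂.card.choose p.2 : ℕ) : ℝ) ≠ 0 := by
          exact_mod_cast (Nat.choose_pos h2).ne'
        rw [expIMC, expIMC]
        field_simp
      · have he : D₂.powersetCard p.2 = ∅ := by
          rw [Finset.powersetCard_eq_empty]
          omega
        rw [if_neg (by tauto), he, Finset.sum_empty, mul_zero]
    · have he : D₁.powersetCard p.1 = ∅ := by
        rw [Finset.powersetCard_eq_empty]
        omega
      rw [if_neg (by tauto), he, Finset.sum_empty, zero_mul]
  rw [expIMC, Finset.card_union_of_disjoint hdisj, hnum, key, div_eq_mul_inv,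
    mul_comm, one_div]
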